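/- arXiv:2007.14537 — 5 statements merged into one kernel-verified Lean document; each statement's English description precedes it below -/
import Mathlib

section
/- For every positive integer n, S_0(2n) = −L_0(2n) − 2·L_0(n). -/
open ArithmeticFunction
open scoped ArithmeticFunction.Omega

lemma omega_le (k : ℕ) : Ω k ≤ k := by
  induction k using Nat.strong_induction_on with
  | _ k ih =>
    rcases Nat.eq_zero_or_pos k with rfl | hk
    · simp
    rcases Nat.eq_or_lt_of_le hk with h1 | h2
    · simp [← h1]
    obtain ⟨p, hp, hdvd⟩ := Nat.exists_prime_and_dvd (by omega : k ≠ 1)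
    obtain ⟨m, rfl⟩ := hdvd
    have hm : m ≠ 0 := by rintro rfl; simp at hk
    have hm1 : 1 ≤ m := Nat.one_le_iff_ne_zero.2 hm
    have hmk : m < p * m := by
      have := hp.two_le
      calc m = 1 * m := (one_mul m).symm
        _ < p * m := by exact (Nat.mul_lt_mul_right hm1).2 (by omega)
    have := ih m hmk
    rw [cardFactors_mul hp.ne_zero hm, cardFactors_apply_prime hp]
    have := hp.two_le
    nlinarith

lemma key (k : ℕ) : (-1 : ℤ) ^ (k - Ω k) = (-1) ^ k * (-1) ^ (Ω k) := by
  have h := omega_le k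
  have : (-1 : ℤ) ^ (k - Ω k) * (-1) ^ (Ω k) = (-1) ^ k := by
    rw [← pow_add]; congr 1; omega
  have h2 : ((-1:ℤ) ^ (Ω k)) * ((-1:ℤ) ^ (Ω k)) = 1 := by
    rw [← pow_add]; exact Even.neg_one_pow ⟨Ω k, by ring⟩
  calc (-1 : ℤ) ^ (k - Ω k) = (-1 : ℤ) ^ (k - Ω k) * ((-1) ^ (Ω k) * (-1) ^ (Ω k)) := by
        rw [h2, mul_one]
    _ = (-1) ^ k * (-1) ^ (Ω k) := by rw [← mul_assoc, this]

/-- `S₀ x = ∑_{k=1}^{x} (-1)^{k-Ω(k)}`, where `Ω k` is the number of prime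
factors of `k` counted with multiplicity. -/
def S0 (x : ℕ) : ℤ :=
  ∑ k ∈ Finset.Icc 1 x, (-1 : ℤ) ^ (k - Ω k)

/-- `L₀ x = ∑_{k=1}^{x} (-1)^{Ω(k)}`, the summatory Liouville function. -/
def L0 (x : ℕ) : ℤ :=
  ∑ k ∈ Finset.Icc 1 x, (-1 : ℤ) ^ (Ω k)

theorem S0_eq_neg_L0 (n : ℕ) (hn : 0 < n) : S0 (2 * n) = -L0 (2 * n) - 2 * L0 n := by
  clear hn
  induction n with
  | zero => simp [S0, L0]
  | succ n ih =>
    have h2 : 2 * (n + 1) = (2 * n + 1) + 1 := by ring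
    have e1 : S0 (2 * (n + 1)) = S0 (2 * n)
        + (-1 : ℤ) ^ ((2 * n + 1) - Ω (2 * n + 1))
        + (-1 : ℤ) ^ ((2 * n + 1 + 1) - Ω (2 * n + 1 + 1)) := by
      simp only [S0, h2]
      rw [Finset.sum_Icc_succ_top (by omega), Finset.sum_Icc_succ_top (by omega)]
    have e2 : L0 (2 * (n + 1)) = L0 (2 * n)
        + (-1 : ℤ) ^ (Ω (2 * n + 1)) + (-1 : ℤ) ^ (Ω (2 * n + 1 + 1)) := by
      simp only [L0, h2]
      rw [Finset.sum_Icc_succ_top (by omega), Finset.sum_Icc_succ_top (by omega)]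
    have e3 : L0 (n + 1) = L0 n + (-1 : ℤ) ^ (Ω (n + 1)) := by
      simp only [L0]
      rw [Finset.sum_Icc_succ_top (by omega)]
    have hk1 : (-1 : ℤ) ^ ((2 * n + 1) - Ω (2 * n + 1)) = -(-1 : ℤ) ^ (Ω (2 * n + 1)) := by
      rw [key, Odd.neg_one_pow ⟨n, by ring⟩, neg_one_mul]
    have hΩ : Ω (2 * n + 1 + 1) = 1 + Ω (n + 1) := by
      rw [show 2 * n + 1 + 1 = 2 * (n + 1) by ring,
        cardFactors_mul two_ne_zero (Nat.succ_ne_zero n), cardFactors_apply_prime Nat.prime_two]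
    have hk2 : (-1 : ℤ) ^ ((2 * n + 1 + 1) - Ω (2 * n + 1 + 1)) = -(-1 : ℤ) ^ (Ω (n + 1)) := by
      rw [key, Even.neg_one_pow ⟨n + 1, by ring⟩, one_mul, hΩ, pow_add, pow_one, neg_one_mul]
    have hL : (-1 : ℤ) ^ (Ω (2 * n + 1 + 1)) = -(-1 : ℤ) ^ (Ω (n + 1)) := by
      rw [hΩ, pow_add, pow_one, neg_one_mul]
    rw [e1, e2, e3, hk1, hk2, hL, ih]
    ring
end

section
/- For every complex number s with Re s > 1, the series ∑_{n=1}^{∞} (−1)^{n−Ω(n)} n^{−s} converges absolutely and ∑_{n=1}^{∞} (−1)^{n−Ω(n)} n^{−s} = −(1 + 2^{1−s})·ζ(2s)/ζ(s). -/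
open ArithmeticFunction Complex
open scoped ArithmeticFunction.Omega

private lemma cardFactors_le_self' (n : ℕ) : Ω n ≤ n := by
  rcases eq_or_ne n 0 with rfl | hn
  · simp
  have h2 : 2 ^ n.primeFactorsList.length ≤ n.primeFactorsList.prod :=
    List.pow_card_le_prod _ _ (fun x hx => (Nat.prime_of_mem_primeFactorsList hx).two_le)
  rw [Nat.prod_primeFactorsList hn] at h2
  calc Ω n = n.primeFactorsList.length := ArithmeticFunction.cardFactors_apply
    _ ≤ 2 ^ n.primeFactorsList.length := Nat.lt_two_pow_self.le
    _ ≤ n := h2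

private lemma neg_one_pow_sub' {m n : ℕ} (h : m ≤ n) :
    (-1 : ℂ) ^ (n - m) = (-1) ^ n * (-1) ^ m := by
  calc (-1:ℂ)^(n-m) = (-1)^(n-m) * ((-1)^m * (-1)^m) := by
        rw [← pow_add, Even.neg_one_pow ⟨m, rfl⟩, mul_one]
    _ = (-1)^n * (-1)^m := by rw [← mul_assoc, ← pow_add, Nat.sub_add_cancel h]

theorem dirichlet_series_S (s : ℂ) (hs : 1 < s.re) :
    Summable (fun n : ℕ => ‖(-1 : ℂ) ^ (n - Ω n) / (n : ℂ) ^ s‖) ∧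
    ∑' n : ℕ, (-1 : ℂ) ^ (n - Ω n) / (n : ℂ) ^ s =
      -(1 + 2 ^ (1 - s)) * riemannZeta (2 * s) / riemannZeta s := by
  have hsre : s.re ≠ 0 := by positivity
  have hs0 : s ≠ 0 := fun h => by simp [h] at hsre
  set g : ℕ → ℂ := fun n => (-1) ^ (Ω n) / (n : ℂ) ^ s with hgdef
  have hnorm : ∀ (k n : ℕ), ‖(-1 : ℂ) ^ k / (n : ℂ) ^ s‖ = 1 / (n : ℝ) ^ s.re := by
    intro k n
    rcases eq_or_ne n 0 with rfl | hn
    · simp [zero_cpow hs0, Real.zero_rpow hsre]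
    · rw [norm_div, norm_pow, norm_neg, norm_one, one_pow,
        Complex.norm_natCast_cpow_of_pos (Nat.pos_of_ne_zero hn)]
  have hsum0 : Summable (fun n : ℕ => 1 / (n : ℝ) ^ s.re) :=
    Real.summable_one_div_nat_rpow.mpr hs
  have hgnorm : Summable (fun n => ‖g n‖) := by
    simpa only [hgdef, hnorm] using hsum0
  have hgs : Summable g := hgnorm.of_norm
  -- the completely multiplicative function n ↦ (-1)^Ω(n) * n^(-s)
  have hmap : ∀ m n : ℕ, (fun n : ℕ => (-1 : ℂ) ^ (Ω n) * (n : ℂ) ^ (-s)) (m * n) =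
      (fun n : ℕ => (-1 : ℂ) ^ (Ω n) * (n : ℂ) ^ (-s)) m *
      (fun n : ℕ => (-1 : ℂ) ^ (Ω n) * (n : ℂ) ^ (-s)) n := by
    intro m n
    rcases eq_or_ne m 0 with rfl | hm
    · simp [zero_cpow (neg_ne_zero.mpr hs0)]
    rcases eq_or_ne n 0 with rfl | hn
    · simp [zero_cpow (neg_ne_zero.mpr hs0)]
    simp only [cardFactors_mul hm hn, Nat.cast_mul, pow_add]
    rw [Complex.natCast_mul_natCast_cpow]
    ring
  let lam : ℕ →*₀ ℂ :=
    { toFun := fun n => (-1) ^ (Ω n) * (n : ℂ) ^ (-s)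
      map_zero' := by simp [zero_cpow (neg_ne_zero.mpr hs0)]
      map_one' := by simp
      map_mul' := fun m n => hmap m n }
  have hlamg : ∀ n, lam n = g n := by
    intro n
    rcases eq_or_ne n 0 with rfl | hn
    · simp [lam, hgdef, zero_cpow (neg_ne_zero.mpr hs0), zero_cpow hs0]
    · simp [lam, hgdef, cpow_neg, div_eq_mul_inv]
  have hlamnorm : Summable (fun n => ‖lam n‖) := by
    simpa only [hlamg] using hgnorm
  have hFdef : ∑' n, lam n = ∑' n, g n := tsum_congr hlamg
  have hEuler : HasProd (fun p : Nat.Primes => (1 - lam p)⁻¹) (∑' n, g n) := by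
    rw [← hFdef]
    exact EulerProduct.eulerProduct_completely_multiplicative_hasProd hlamnorm
  have hlamp : ∀ p : Nat.Primes, (1 - lam (p : ℕ))⁻¹ = (1 + (p : ℂ) ^ (-s))⁻¹ := by
    intro p
    simp [lam, cardFactors_apply_prime p.prop, sub_neg_eq_add]
  rw [funext hlamp] at hEuler
  have hmul := hEuler.mul (riemannZeta_eulerProduct_hasProd hs)
  have h2s : 1 < (2 * s).re := by
    have : (2 * s).re = 2 * s.re := by simp [Complex.mul_re]
    rw [this]; linarith
  have hfun : (fun p : Nat.Primes => (1 + (p : ℂ) ^ (-s))⁻¹ * (1 - (p : ℂ) ^ (-s))⁻¹) =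
      fun p : Nat.Primes => (1 - (p : ℂ) ^ (-(2 * s)))⁻¹ := by
    funext p
    have hp0 : (p : ℂ) ≠ 0 := Nat.cast_ne_zero.mpr p.prop.ne_zero
    have hx : (p : ℂ) ^ (-(2 * s)) = (p : ℂ) ^ (-s) * (p : ℂ) ^ (-s) := by
      rw [← cpow_add _ _ hp0]; ring_nf
    rw [← mul_inv, hx]; congr 1; ring
  rw [hfun] at hmul
  have hζ2 := riemannZeta_eulerProduct_hasProd h2s
  have hFζ : (∑' n, g n) * riemannZeta s = riemannZeta (2 * s) := hmul.unique hζ2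
  have hζne : riemannZeta s ≠ 0 := riemannZeta_ne_zero_of_one_lt_re hs
  have hF : ∑' n, g n = riemannZeta (2 * s) / riemannZeta s :=
    eq_div_of_mul_eq hζne hFζ
  -- even part
  set f2 : ℕ → ℂ := Set.indicator {n : ℕ | Even n} g with hf2def
  have hf2 : ∀ n : ℕ, f2 n = if Even n then g n else 0 := by
    intro n; simp [hf2def, Set.indicator_apply]
  have hf2s : Summable f2 := hgs.indicator _
  have hg2 : ∀ m : ℕ, g (2 * m) = -(2 : ℂ) ^ (-s) * g m := by
    intro m
    rcases eq_or_ne m 0 with rfl | hm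
    · simp [hgdef, zero_cpow hs0]
    · simp only [hgdef, cardFactors_mul (two_ne_zero) hm,
        cardFactors_apply_prime Nat.prime_two, Nat.cast_mul, pow_add]
      rw [Complex.natCast_mul_natCast_cpow, cpow_neg]
      simp only [div_eq_mul_inv, mul_inv, pow_one]
      ring
  have hinj : Function.Injective (fun m : ℕ => 2 * m) := mul_right_injective₀ two_ne_zero
  have hsupp : Function.support f2 ⊆ Set.range (fun m : ℕ => 2 * m) := by
    intro n hn
    by_contra hr
    apply hn
    rw [hf2 n, if_neg]
    intro ⟨k, hk⟩
    exact hr ⟨k, show 2 * k = n by omega⟩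
  have hE : ∑' m : ℕ, f2 (2 * m) = ∑' n, f2 n := hinj.tsum_eq hsupp
  have hEval : ∑' n, f2 n = -(2 : ℂ) ^ (-s) * ∑' n, g n := by
    rw [← hE]
    calc ∑' m : ℕ, f2 (2 * m) = ∑' m : ℕ, -(2 : ℂ) ^ (-s) * g m := by
          refine tsum_congr fun m => ?_
          rw [hf2, if_pos ⟨m, by ring⟩, hg2]
      _ = -(2 : ℂ) ^ (-s) * ∑' n, g n := tsum_mul_left
  -- main sum
  have hterm : ∀ n : ℕ, (-1 : ℂ) ^ (n - Ω n) / (n : ℂ) ^ s = 2 * f2 n - g n := by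
    intro n
    rw [neg_one_pow_sub' (cardFactors_le_self' n), hf2]
    rcases Nat.even_or_odd n with he | ho
    · rw [if_pos he, he.neg_one_pow, hgdef]
      simp only [one_mul]
      ring
    · rw [if_neg (Nat.not_even_iff_odd.mpr ho), ho.neg_one_pow, hgdef]
      simp only [mul_zero]
      ring
  constructor
  · simp only [hnorm]
    exact hsum0
  · calc ∑' n : ℕ, (-1 : ℂ) ^ (n - Ω n) / (n : ℂ) ^ s
        = ∑' n : ℕ, (2 * f2 n - g n) := tsum_congr hterm
      _ = 2 * (∑' n, f2 n) - ∑' n, g n := by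
          rw [Summable.tsum_sub (hf2s.mul_left 2) hgs, tsum_mul_left]
      _ = 2 * (-(2 : ℂ) ^ (-s) * (riemannZeta (2 * s) / riemannZeta s))
            - riemannZeta (2 * s) / riemannZeta s := by rw [hEval, hF]
      _ = -(1 + 2 ^ (1 - s)) * riemannZeta (2 * s) / riemannZeta s := by
          have h2 : (2 : ℂ) ^ (1 - s) = 2 * (2 : ℂ) ^ (-s) := by
            rw [sub_eq_add_neg, cpow_add _ _ (two_ne_zero), cpow_one]
          rw [h2]
          ring
end

section
/- For every complex number s with Re s > 1, the series ∑_{n=1}^{∞} (−1)^{ω(n)} n^{−s} converges absolutely, the product ∏_{p prime} (1 − 2p^{−s}) converges (is multipliable), and ∑_{n=1}^{∞} (−1)^{ω(n)} n^{−s} = ζ(s) · ∏_{p prime} (1 − 2p^{−s}). -/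
open ArithmeticFunction Complex
open scoped ArithmeticFunction.omega

private lemma omega_mul_coprime' {m n : ℕ} (h : Nat.Coprime m n) :
    ω (m * n) = ω m + ω n := by
  rcases eq_or_ne m 0 with rfl | hm
  · obtain rfl := Nat.coprime_zero_left n |>.mp h
    simp
  rcases eq_or_ne n 0 with rfl | hn
  · obtain rfl := Nat.coprime_zero_right m |>.mp h
    simp
  have key : ∀ k : ℕ, ω k = k.primeFactors.card := fun k => by
    rw [cardDistinctFactors_apply, ← List.card_toFinset, Nat.toFinset_factors]
  rw [key, key, key, h.primeFactors_mul,
    Finset.card_union_of_disjoint (Nat.Coprime.disjoint_primeFactors h)]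

theorem dirichlet_series_H (s : ℂ) (hs : 1 < s.re) :
    Summable (fun n : ℕ => ‖(-1 : ℂ) ^ (ω n) / (n : ℂ) ^ s‖) ∧
    Multipliable (fun p : Nat.Primes => 1 - 2 * ((p : ℕ) : ℂ) ^ (-s)) ∧
    ∑' n : ℕ, (-1 : ℂ) ^ (ω n) / (n : ℂ) ^ s =
      riemannZeta s * ∏' p : Nat.Primes, (1 - 2 * ((p : ℕ) : ℂ) ^ (-s)) := by
  have hs0 : s ≠ 0 := ne_zero_of_one_lt_re hs
  set R := riemannZetaSummandHom hs0 with hR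
  have hRdef : ∀ n : ℕ, R n = (n : ℂ) ^ (-s) := fun n => rfl
  set f : ℕ → ℂ := fun n => (-1 : ℂ) ^ (ω n) * R n with hf
  have hnorm : ∀ n, ‖f n‖ = ‖R n‖ := fun n => by rw [hf]; simp [norm_mul]
  have hsumR := summable_riemannZetaSummand hs
  have hsum : Summable (fun n => ‖f n‖) := hsumR.congr fun n => (hnorm n).symm
  have hfeq : ∀ n : ℕ, f n = (-1 : ℂ) ^ (ω n) / (n : ℂ) ^ s := fun n => by
    show (-1 : ℂ) ^ (ω n) * R n = _
    rw [hRdef, cpow_neg, div_eq_mul_inv]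
  have hRnorm : ∀ p : Nat.Primes, ‖R p‖ = (p : ℝ) ^ (-s.re) := fun p => by
    rw [hRdef, ← ofReal_natCast,
      norm_cpow_eq_rpow_re_of_nonneg (Nat.cast_nonneg _) (re_neg_ne_zero_of_one_lt_re hs),
      neg_re]
  have hs_pos : (0 : ℝ) < s.re := lt_trans one_pos hs
  have hRhalf : ∀ p : Nat.Primes, ‖R p‖ < 1 / 2 := fun p => by
    have hp0 : (0 : ℝ) < ((p : ℕ) : ℝ) := by exact_mod_cast p.2.pos
    rw [hRnorm, Real.rpow_neg hp0.le]
    rw [inv_lt_comm₀ (Real.rpow_pos_of_pos hp0 _) (by norm_num)]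
    calc (1/2 : ℝ)⁻¹ = 2 := by norm_num
    _ < 2 ^ s.re := by
        nth_rewrite 1 [show (2:ℝ) = 2 ^ (1:ℝ) by norm_num]
        exact Real.rpow_lt_rpow_left_iff (by norm_num) |>.mpr hs
    _ ≤ (p : ℝ) ^ s.re := by
        apply Real.rpow_le_rpow (by norm_num) _ hs_pos.le
        exact_mod_cast p.2.two_le
  have hR1 : ∀ p : Nat.Primes, ‖R p‖ < 1 := fun p => (hRhalf p).trans (by norm_num)
  have hne2 : ∀ p : Nat.Primes, 1 - 2 * R p ≠ 0 := fun p => by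
    intro h
    have h2 : (2 : ℂ) * R p = 1 := by linear_combination -h
    have h3 := congrArg norm h2
    rw [norm_mul, Complex.norm_ofNat, norm_one] at h3
    have := hRhalf p
    nlinarith [norm_nonneg (R p)]
  have hne1 : ∀ p : Nat.Primes, 1 - R p ≠ 0 := fun p => by
    intro h
    have h2 : R p = 1 := by linear_combination -h
    have h3 := congrArg norm h2
    rw [norm_one] at h3
    have := hR1 p
    linarith
  have hf1 : f 1 = 1 := by simp [hf, hRdef]
  have hf0 : f 0 = 0 := by simp [hf, hRdef, hs0]
  have hmul : ∀ {m n : ℕ}, Nat.Coprime m n → f (m * n) = f m * f n := by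
    intro m n h
    show (-1 : ℂ) ^ (ω (m * n)) * R (m * n) = ((-1 : ℂ) ^ (ω m) * R m) * ((-1 : ℂ) ^ (ω n) * R n)
    rw [omega_mul_coprime' h, pow_add, map_mul]
    ring
  have hP := EulerProduct.eulerProduct_hasProd hf1 hmul hsum hf0
  have hfactor : ∀ p : Nat.Primes,
      (∑' e : ℕ, f ((p : ℕ) ^ e)) = (1 - 2 * R p) * (1 - R p)⁻¹ := by
    intro p
    have hgeo : Summable fun e : ℕ => (R p) ^ e :=
      summable_geometric_of_norm_lt_one (hR1 p)
    have hterm : ∀ e : ℕ, f ((p : ℕ) ^ e) = (-1 : ℂ) ^ (ω ((p:ℕ) ^ e)) * (R p) ^ e := by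
      intro e
      show (-1 : ℂ) ^ (ω ((p:ℕ) ^ e)) * R ((p : ℕ) ^ e) = _
      rw [← map_pow]
    have hsummf : Summable fun e : ℕ => f ((p : ℕ) ^ e) := by
      apply Summable.of_norm
      refine (hgeo.norm.congr ?_)
      intro e
      simp [hterm e, norm_mul, norm_pow]
    rw [Summable.tsum_eq_zero_add hsummf]
    have h0 : f ((p : ℕ) ^ 0) = 1 := by rw [pow_zero]; exact hf1
    have hsucc : ∀ e : ℕ, f ((p : ℕ) ^ (e + 1)) = -(R p * (R p) ^ e) := by
      intro e
      rw [hterm (e + 1), cardDistinctFactors_apply_prime_pow p.2 (Nat.succ_ne_zero e),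
        pow_one, pow_succ]
      ring
    calc f ((p:ℕ) ^ 0) + ∑' e : ℕ, f ((p:ℕ) ^ (e + 1))
        = 1 + ∑' e : ℕ, -(R p * (R p) ^ e) := by rw [h0]; exact congrArg _ (tsum_congr hsucc)
      _ = 1 - R p * (1 - R p)⁻¹ := by
          rw [tsum_neg, tsum_mul_left, tsum_geometric_of_norm_lt_one (hR1 p)]
          ring
      _ = (1 - R p - R p) * (1 - R p)⁻¹ := by
          rw [sub_mul, mul_inv_cancel₀ (hne1 p)]
      _ = (1 - 2 * R p) * (1 - R p)⁻¹ := by ring_nf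
  have hP' : HasProd (fun p : Nat.Primes => (1 - 2 * R p) * (1 - R p)⁻¹) (∑' n, f n) :=
    (funext hfactor : (fun p : Nat.Primes => ∑' e : ℕ, f ((p:ℕ) ^ e)) = _) ▸ hP
  have hZ : HasProd (fun p : Nat.Primes => (1 - R p)⁻¹) (riemannZeta s) :=
    riemannZeta_eulerProduct_hasProd hs
  have hS : Summable fun p : Nat.Primes => 3 * ‖R (p : ℕ)‖ := by
    have h1 : Summable fun p : Nat.Primes => ‖R (p : ℕ)‖ :=
      hsumR.comp_injective (Subtype.val_injective : Function.Injective ((↑) : Nat.Primes → ℕ))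
    exact h1.mul_left 3
  have hlog : Summable fun p : Nat.Primes => Complex.log (1 - 2 * R p) := by
    apply Summable.of_norm_bounded_eventually hS
    refine Filter.eventually_cofinite.mpr ?_
    apply Set.Finite.subset (Set.Finite.preimage (f := fun p : Nat.Primes => (p : ℕ))
      Subtype.val_injective.injOn (Set.finite_Iio 5))
    intro p hp
    simp only [Set.mem_setOf_eq] at hp
    simp only [Set.mem_preimage, Set.mem_Iio]
    by_contra hge
    push_neg at hge
    apply hp
    have hp0 : (0 : ℝ) < ((p : ℕ) : ℝ) := by exact_mod_cast p.2.pos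
    have h14 : ‖(-(2 * R p))‖ ≤ 1 / 2 := by
      rw [norm_neg, norm_mul, Complex.norm_ofNat]
      rw [hRnorm, Real.rpow_neg hp0.le]
      rw [show (1/2 : ℝ) = 2 * (4:ℝ)⁻¹ by norm_num]
      apply mul_le_mul_of_nonneg_left _ (by norm_num)
      rw [inv_le_inv₀ (Real.rpow_pos_of_pos hp0 _) (by norm_num)]
      calc (4:ℝ) = 4 ^ (1:ℝ) := by norm_num
        _ ≤ 4 ^ s.re := Real.rpow_le_rpow_left_iff (by norm_num) |>.mpr hs.le
        _ ≤ (p:ℝ) ^ s.re := by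
            apply Real.rpow_le_rpow (by norm_num) _ hs_pos.le
            have : (5:ℕ) ≤ (p:ℕ) := hge
            exact_mod_cast le_trans (by norm_num) this
    have hb := Complex.norm_log_one_add_half_le_self h14
    rw [show (1 : ℂ) + -(2 * R p) = 1 - 2 * R p by ring] at hb
    refine hb.trans ?_
    rw [norm_neg, norm_mul, Complex.norm_ofNat]
    nlinarith [norm_nonneg (R p)]
  have hmult2 : Multipliable fun p : Nat.Primes => 1 - 2 * R p :=
    Complex.multipliable_of_summable_log hlog
  refine ⟨hsum.congr fun n => by rw [hfeq], hmult2, ?_⟩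
  show ∑' n : ℕ, (-1 : ℂ) ^ (ω n) / (n : ℂ) ^ s =
      riemannZeta s * ∏' p : Nat.Primes, (1 - 2 * R p)
  calc ∑' n : ℕ, (-1 : ℂ) ^ (ω n) / (n : ℂ) ^ s
      = ∑' n, f n := (tsum_congr hfeq).symm
    _ = ∏' p : Nat.Primes, (1 - 2 * R p) * (1 - R p)⁻¹ := hP'.tprod_eq.symm
    _ = (∏' p : Nat.Primes, (1 - 2 * R p)) * ∏' p : Nat.Primes, (1 - R p)⁻¹ :=
        Multipliable.tprod_mul hmult2 hZ.multipliable
    _ = riemannZeta s * ∏' p : Nat.Primes, (1 - 2 * R p) := by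
        rw [hZ.tprod_eq]; ring
end

section
/- Define, for complex s, the Euler product F_6(s) = ∏_{p prime} (1−2p^{−s})·(1−p^{−s})^{−2}·(1−p^{−2s})^{−1}·(1−p^{−3s})^{−2}·(1−p^{−4s})^{−3}·(1−p^{−5s})^{−6}·(1−p^{−6s})^{−9}. Then the product defining F_6(s) converges (is multipliable) for every complex s with Re s > 1/7, and for every complex s with Re s > 1 one has (∑_{n=1}^{∞} (−1)^{ω(n)} n^{−s}) · ζ(s)·ζ(2s)·ζ(3s)²·ζ(4s)³·ζ(5s)⁶·ζ(6s)⁹ = F_6(s). -/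
open ArithmeticFunction
open scoped ArithmeticFunction.omega

/-- The factor at the prime `p` in the Euler product defining `F₆(s)`. -/
noncomputable def F6Term (s : ℂ) (p : Nat.Primes) : ℂ :=
  (1 - 2 * ((p : ℕ) : ℂ) ^ (-s)) *
    ((1 - ((p : ℕ) : ℂ) ^ (-s)) ^ 2)⁻¹ *
    (1 - ((p : ℕ) : ℂ) ^ (-(2 * s)))⁻¹ *
    ((1 - ((p : ℕ) : ℂ) ^ (-(3 * s))) ^ 2)⁻¹ *
    ((1 - ((p : ℕ) : ℂ) ^ (-(4 * s))) ^ 3)⁻¹ *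
    ((1 - ((p : ℕ) : ℂ) ^ (-(5 * s))) ^ 6)⁻¹ *
    ((1 - ((p : ℕ) : ℂ) ^ (-(6 * s))) ^ 9)⁻¹

namespace F6

noncomputable def Phi (x : ℂ) : ℂ :=
  (1 - 2 * x) * ((1 - x) ^ 2)⁻¹ * (1 - x ^ 2)⁻¹ * ((1 - x ^ 3) ^ 2)⁻¹ *
    ((1 - x ^ 4) ^ 3)⁻¹ * ((1 - x ^ 5) ^ 6)⁻¹ * ((1 - x ^ 6) ^ 9)⁻¹

def Rlist : List ℤ := [-18, 6, 4, 13, 12, 37, 40, -72, -58, -109, -66, -102, 144, 363, 296, 311, -6, -242, -1040, -951, -638, -29, 984, 1865, 2570, 1119, 36, -2118, -3594, -4369, -2752, 729, 3076, 6268, 6294, 4645, -854, -5034, -7920, -9027, -5400, -102, 6918, 9036, 10214, 6422, 0, -6422, -10214, -9036, -6918, 102, 5400, 9027, 7920, 5034, 854, -4645, -6294, -6268, -3076, -729, 2752, 4369, 3594, 2118, -36, -1119, -2570, -1865, -984, 29, 638, 951, 1040, 242, 6, -311, -296, -363, -144, 102, 66, 109, 58, 72, -40, -37, -12, -13, -4,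 -6, 18, 0, 0, 0, 0, 0, -2, 1]

noncomputable def polyEval (l : List ℤ) (x : ℂ) : ℂ :=
  l.foldr (fun (c : ℤ) (acc : ℂ) ↦ (c : ℂ) + x * acc) 0

noncomputable def Rpoly (x : ℂ) : ℂ := polyEval Rlist x

noncomputable def Rbound : ℝ := (Rlist.map (fun c ↦ |(c : ℝ)|)).sum

lemma Rbound_nonneg : 0 ≤ Rbound := by
  apply List.sum_nonneg
  intro a ha
  simp only [List.mem_map] at ha
  obtain ⟨c, -, rfl⟩ := ha
  exact abs_nonneg _

set_option maxHeartbeats 1000000 in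
set_option maxRecDepth 10000 in
lemma key_poly (x : ℂ) :
    (1 - 2 * x) - (1 - x) ^ 2 * (1 - x ^ 2) * (1 - x ^ 3) ^ 2 * (1 - x ^ 4) ^ 3 *
      (1 - x ^ 5) ^ 6 * (1 - x ^ 6) ^ 9 = x ^ 7 * Rpoly x := by
  unfold Rpoly polyEval Rlist
  simp only [List.foldr_cons, List.foldr_nil]
  push_cast
  ring

lemma horner_step {x t c : ℂ} {a B : ℝ} (hx : ‖x‖ ≤ 1) (hc : ‖c‖ ≤ a) (ht : ‖t‖ ≤ B)
    (hB : 0 ≤ B) : ‖c + x * t‖ ≤ a + B := by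
  calc ‖c + x * t‖ ≤ ‖c‖ + ‖x‖ * ‖t‖ := by
        simpa [norm_mul] using norm_add_le c (x * t)
    _ ≤ a + B := add_le_add hc (by simpa using mul_le_mul hx ht (norm_nonneg t) zero_le_one)

lemma polyEval_bound {x : ℂ} (hx : ‖x‖ ≤ 1) :
    ∀ l : List ℤ, ‖polyEval l x‖ ≤ (l.map (fun c ↦ |(c : ℝ)|)).sum := by
  intro l
  induction l with
  | nil => simp [polyEval]
  | cons c l ih =>
      have hB : 0 ≤ (l.map (fun c ↦ |(c : ℝ)|)).sum := by
        apply List.sum_nonneg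
        intro a ha
        simp only [List.mem_map] at ha
        obtain ⟨d, -, rfl⟩ := ha
        exact abs_nonneg _
      simpa [polyEval] using horner_step hx (by simp) ih hB

lemma Rpoly_bound {x : ℂ} (hx : ‖x‖ ≤ 1) : ‖Rpoly x‖ ≤ Rbound :=
  polyEval_bound hx Rlist

lemma F6Term_eq_Phi (s : ℂ) (p : Nat.Primes) : F6Term s p = Phi (((p : ℕ) : ℂ) ^ (-s)) := by
  unfold F6Term Phi
  rw [show -(2 * s) = ((2 : ℕ) : ℂ) * (-s) by push_cast; ring,
    show -(3 * s) = ((3 : ℕ) : ℂ) * (-s) by push_cast; ring,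
    show -(4 * s) = ((4 : ℕ) : ℂ) * (-s) by push_cast; ring,
    show -(5 * s) = ((5 : ℕ) : ℂ) * (-s) by push_cast; ring,
    show -(6 * s) = ((6 : ℕ) : ℂ) * (-s) by push_cast; ring,
    Complex.cpow_nat_mul, Complex.cpow_nat_mul, Complex.cpow_nat_mul, Complex.cpow_nat_mul,
    Complex.cpow_nat_mul]

lemma one_sub_le {x : ℂ} (hx : ‖x‖ ≤ 1) {k : ℕ} (hk : k ≠ 0) :
    1 - ‖x‖ ≤ ‖1 - x ^ k‖ := by
  have h1 : ‖x ^ k‖ ≤ ‖x‖ := by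
    rw [norm_pow]
    exact pow_le_of_le_one (norm_nonneg x) hx hk
  calc 1 - ‖x‖ ≤ 1 - ‖x ^ k‖ := by linarith
    _ = ‖(1 : ℂ)‖ - ‖x ^ k‖ := by simp
    _ ≤ ‖1 - x ^ k‖ := norm_sub_norm_le _ _

lemma Phi_sub_one_bound {x : ℂ} (hx : ‖x‖ < 1) :
    ‖Phi x - 1‖ ≤ Rbound * ‖x‖ ^ 7 / (1 - ‖x‖) ^ 23 := by
  have h0 : (0:ℝ) < 1 - ‖x‖ := by linarith
  have hne : ∀ k : ℕ, k ≠ 0 → (1 : ℂ) - x ^ k ≠ 0 := by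
    intro k hk h
    have := one_sub_le hx.le hk
    rw [h, norm_zero] at this
    linarith
  have h1 := hne 1 one_ne_zero
  rw [pow_one] at h1
  have h2 := hne 2 two_ne_zero
  have h3 := hne 3 three_ne_zero
  have h4 := hne 4 (by norm_num)
  have h5 := hne 5 (by norm_num)
  have h6 := hne 6 (by norm_num)
  have key : Phi x - 1 = x ^ 7 * Rpoly x *
      ((1 - x) ^ 2 * (1 - x ^ 2) * (1 - x ^ 3) ^ 2 * (1 - x ^ 4) ^ 3 * (1 - x ^ 5) ^ 6 *
        (1 - x ^ 6) ^ 9)⁻¹ := by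
    have hD : (1 - x) ^ 2 * (1 - x ^ 2) * (1 - x ^ 3) ^ 2 * (1 - x ^ 4) ^ 3 * (1 - x ^ 5) ^ 6 *
        (1 - x ^ 6) ^ 9 ≠ 0 := by
      exact mul_ne_zero (mul_ne_zero (mul_ne_zero (mul_ne_zero (mul_ne_zero
        (pow_ne_zero _ h1) h2) (pow_ne_zero _ h3)) (pow_ne_zero _ h4))
        (pow_ne_zero _ h5)) (pow_ne_zero _ h6)
    unfold Phi
    field_simp
    linear_combination key_poly x
  rw [key]
  have hDlb : (1 - ‖x‖) ^ 23 ≤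
      ‖(1 - x) ^ 2 * (1 - x ^ 2) * (1 - x ^ 3) ^ 2 * (1 - x ^ 4) ^ 3 * (1 - x ^ 5) ^ 6 *
        (1 - x ^ 6) ^ 9‖ := by
    have e1 := one_sub_le hx.le (k := 1) one_ne_zero
    rw [pow_one] at e1
    have e2 := one_sub_le hx.le (k := 2) two_ne_zero
    have e3 := one_sub_le hx.le (k := 3) three_ne_zero
    have e4 := one_sub_le hx.le (k := 4) (by norm_num)
    have e5 := one_sub_le hx.le (k := 5) (by norm_num)
    have e6 := one_sub_le hx.le (k := 6) (by norm_num)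
    calc (1 - ‖x‖) ^ 23
        = (1-‖x‖)^2 * (1-‖x‖)^1 * (1-‖x‖)^2 * (1-‖x‖)^3 * (1-‖x‖)^6 * (1-‖x‖)^9 := by ring
      _ ≤ ‖1-x‖^2 * ‖1-x^2‖^1 * ‖1-x^3‖^2 * ‖1-x^4‖^3 * ‖1-x^5‖^6 * ‖1-x^6‖^9 := by
          gcongr <;> first | assumption | linarith
      _ = ‖(1 - x) ^ 2 * (1 - x ^ 2) * (1 - x ^ 3) ^ 2 * (1 - x ^ 4) ^ 3 * (1 - x ^ 5) ^ 6 *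
          (1 - x ^ 6) ^ 9‖ := by simp only [norm_mul, norm_pow]; ring
  rw [norm_mul, norm_mul, norm_pow, norm_inv]
  rw [div_eq_mul_inv]
  have hRb := Rpoly_bound hx.le
  have step1 : ‖x‖ ^ 7 * ‖Rpoly x‖ ≤ Rbound * ‖x‖ ^ 7 := by
    rw [mul_comm Rbound]
    exact mul_le_mul_of_nonneg_left hRb (by positivity)
  have step2 : ‖(1 - x) ^ 2 * (1 - x ^ 2) * (1 - x ^ 3) ^ 2 * (1 - x ^ 4) ^ 3 * (1 - x ^ 5) ^ 6 *
      (1 - x ^ 6) ^ 9‖⁻¹ ≤ ((1 - ‖x‖) ^ 23)⁻¹ :=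
    inv_anti₀ (by positivity) hDlb
  exact mul_le_mul step1 step2 (by positivity) (mul_nonneg Rbound_nonneg (by positivity))

lemma norm_x (s : ℂ) (p : Nat.Primes) :
    ‖((p : ℕ) : ℂ) ^ (-s)‖ = (p : ℕ) ^ (-s.re) := by
  rw [Complex.norm_natCast_cpow_of_pos p.prop.pos, Complex.neg_re]

lemma norm_x_le {s : ℂ} (hs : 0 < s.re) (p : Nat.Primes) :
    ‖((p : ℕ) : ℂ) ^ (-s)‖ ≤ (2 : ℝ) ^ (-s.re) := by
  rw [norm_x]
  have h2 : (2:ℝ) ≤ ((p : ℕ) : ℝ) := by exact_mod_cast p.prop.two_le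
  rw [Real.rpow_neg (by norm_num), Real.rpow_neg (by positivity)]
  exact inv_anti₀ (Real.rpow_pos_of_pos (by norm_num) _)
    (Real.rpow_le_rpow (by norm_num) h2 hs.le)

lemma c_lt_one {s : ℂ} (hs : 0 < s.re) : (2 : ℝ) ^ (-s.re) < 1 :=
  Real.rpow_lt_one_of_one_lt_of_neg one_lt_two (by linarith)

lemma F6Term_sub_one_bound {s : ℂ} (hs : 0 < s.re) (p : Nat.Primes) :
    ‖F6Term s p - 1‖ ≤ Rbound / (1 - (2 : ℝ) ^ (-s.re)) ^ 23 * ((p : ℕ) : ℝ) ^ (-(7 * s.re)) := by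
  have hc := c_lt_one hs
  have hxc := norm_x_le hs p
  have hx1 : ‖((p : ℕ) : ℂ) ^ (-s)‖ < 1 := lt_of_le_of_lt hxc hc
  have hkey := Phi_sub_one_bound hx1
  rw [← F6Term_eq_Phi] at hkey
  refine hkey.trans ?_
  have hx7 : ‖((p : ℕ) : ℂ) ^ (-s)‖ ^ 7 = ((p : ℕ) : ℝ) ^ (-(7 * s.re)) := by
    rw [norm_x, ← Real.rpow_natCast (((p : ℕ) : ℝ) ^ (-s.re)) 7,
      ← Real.rpow_mul (by positivity)]
    norm_num
    ring_nf
  rw [← hx7, div_eq_mul_inv, div_eq_mul_inv, mul_assoc,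
    mul_comm (‖((p : ℕ) : ℂ) ^ (-s)‖ ^ 7), ← mul_assoc]
  have hd : ((1 - ‖((p : ℕ) : ℂ) ^ (-s)‖) ^ 23)⁻¹ ≤ ((1 - (2:ℝ) ^ (-s.re)) ^ 23)⁻¹ := by
    apply inv_anti₀
    · exact pow_pos (by linarith) _
    · apply pow_le_pow_left₀ (by linarith) (by linarith)
  apply mul_le_mul_of_nonneg_right _ (by positivity)
  exact mul_le_mul_of_nonneg_left hd Rbound_nonneg

lemma summable_bound {s : ℂ} (hs : 1 / 7 < s.re) :
    Summable (fun p : Nat.Primes ↦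
      Rbound / (1 - (2 : ℝ) ^ (-s.re)) ^ 23 * ((p : ℕ) : ℝ) ^ (-(7 * s.re))) :=
  (Nat.Primes.summable_rpow.mpr (by linarith)).mul_left _

lemma summable_sub_one {s : ℂ} (hs : 1 / 7 < s.re) :
    Summable (fun p : Nat.Primes ↦ F6Term s p - 1) :=
  Summable.of_norm_bounded (summable_bound hs)
    (fun p ↦ F6Term_sub_one_bound (by linarith) p)

lemma hasProd_zero_of_eq_zero {ι : Type*} (f : ι → ℂ) (i₀ : ι) (h : f i₀ = 0) :
    HasProd f 0 := by
  rw [HasProd]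
  apply Filter.Tendsto.congr' _ tendsto_const_nhds
  filter_upwards [Filter.eventually_ge_atTop ({i₀} : Finset ι)] with t ht
  exact (Finset.prod_eq_zero (ht (Finset.mem_singleton_self i₀)) h).symm

lemma multipliable (s : ℂ) (hs : 1 / 7 < s.re) : Multipliable (F6Term s) := by
  by_cases h : ∀ p : Nat.Primes, F6Term s p ≠ 0
  · have hlog : Summable (fun p : Nat.Primes ↦ Complex.log (F6Term s p)) := by
      apply Summable.of_norm_bounded_eventually
        (g := fun p : Nat.Primes ↦ (3 / 2 : ℝ) *
          (Rbound / (1 - (2 : ℝ) ^ (-s.re)) ^ 23 * ((p : ℕ) : ℝ) ^ (-(7 * s.re))))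
        ((summable_bound hs).mul_left _)
      have hsmall : ∀ᶠ p : Nat.Primes in Filter.cofinite,
          Rbound / (1 - (2 : ℝ) ^ (-s.re)) ^ 23 * ((p : ℕ) : ℝ) ^ (-(7 * s.re)) < 1 / 2 :=
        (summable_bound hs).tendsto_cofinite_zero.eventually
          (eventually_lt_nhds (show (0:ℝ) < 1/2 by norm_num))
      filter_upwards [hsmall] with p hp
      have hb := F6Term_sub_one_bound (show 0 < s.re by linarith) p
      have hhalf : ‖F6Term s p - 1‖ ≤ 1 / 2 := le_trans hb hp.le
      have heq : F6Term s p = 1 + (F6Term s p - 1) := by ring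
      rw [heq]
      calc ‖Complex.log (1 + (F6Term s p - 1))‖ ≤ 3 / 2 * ‖F6Term s p - 1‖ :=
            Complex.norm_log_one_add_half_le_self hhalf
        _ ≤ 3 / 2 * (Rbound / (1 - (2 : ℝ) ^ (-s.re)) ^ 23 * ((p : ℕ) : ℝ) ^ (-(7 * s.re))) :=
            mul_le_mul_of_nonneg_left hb (by norm_num)
    exact Complex.multipliable_of_summable_log hlog
  · push_neg at h
    obtain ⟨p₀, hp₀⟩ := h
    exact ⟨0, hasProd_zero_of_eq_zero _ p₀ hp₀⟩

/-! ### Part 2: the identity -/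

noncomputable def F (s : ℂ) (n : ℕ) : ℂ := (-1) ^ (ω n) * (n : ℂ) ^ (-s)

lemma omega_eq (k : ℕ) : ω k = k.primeFactors.card := by
  rw [cardDistinctFactors_apply, Nat.primeFactors, List.card_toFinset]

lemma F_zero {s : ℂ} (hs : s ≠ 0) : F s 0 = 0 := by
  unfold F
  rw [Nat.cast_zero, Complex.zero_cpow (neg_ne_zero.mpr hs), mul_zero]

lemma F_one (s : ℂ) : F s 1 = 1 := by
  unfold F
  simp

lemma F_mul {s : ℂ} (hs : s ≠ 0) {m n : ℕ} (h : Nat.Coprime m n) :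
    F s (m * n) = F s m * F s n := by
  rcases eq_or_ne m 0 with rfl | hm
  · rw [Nat.coprime_zero_left] at h
    subst h
    simp [F_zero hs]
  rcases eq_or_ne n 0 with rfl | hn
  · rw [Nat.coprime_zero_right] at h
    subst h
    simp [F_zero hs]
  have homega : ω (m * n) = ω m + ω n := by
    rw [omega_eq, omega_eq, omega_eq, Nat.Coprime.primeFactors_mul h,
      Finset.card_union_of_disjoint (Nat.Coprime.disjoint_primeFactors h)]
  unfold F
  rw [homega, pow_add, Nat.cast_mul, Complex.natCast_mul_natCast_cpow]
  ring

lemma F_summable {s : ℂ} (hs : 1 < s.re) : Summable (fun n ↦ ‖F s n‖) := by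
  have heq : (fun n : ℕ ↦ ‖F s n‖) = fun n : ℕ ↦ (n : ℝ) ^ (-s.re) := by
    funext n
    rcases eq_or_ne n 0 with rfl | hn
    · rw [F_zero, norm_zero, Nat.cast_zero,
        Real.zero_rpow (by intro h; rw [neg_eq_zero] at h; rw [h] at hs; linarith)]
      intro h
      rw [h] at hs
      simp at hs
      linarith
    · unfold F
      rw [norm_mul, norm_pow, norm_neg, norm_one, one_pow, one_mul,
        Complex.norm_natCast_cpow_of_pos (Nat.pos_of_ne_zero hn), Complex.neg_re]
  rw [heq]
  exact Real.summable_nat_rpow.mpr (by linarith)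

lemma prime_pow_cpow (p : Nat.Primes) (e : ℕ) (s : ℂ) :
    (((p : ℕ) ^ e : ℕ) : ℂ) ^ (-s) = (((p : ℕ) : ℂ) ^ (-s)) ^ e := by
  push_cast
  rw [← Complex.natCast_cpow_natCast_mul, Complex.cpow_nat_mul]

lemma factor_hasSum {s : ℂ} (hs : 1 < s.re) (p : Nat.Primes) :
    HasSum (fun e : ℕ ↦ F s ((p : ℕ) ^ e))
      ((1 - 2 * ((p : ℕ) : ℂ) ^ (-s)) * (1 - ((p : ℕ) : ℂ) ^ (-s))⁻¹) := by
  have hx : ‖((p : ℕ) : ℂ) ^ (-s)‖ < 1 := by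
    rw [norm_x]
    exact Real.rpow_lt_one_of_one_lt_of_neg (by exact_mod_cast p.prop.one_lt) (by linarith)
  set x : ℂ := ((p : ℕ) : ℂ) ^ (-s) with hxdef
  have h1 : HasSum (fun e : ℕ ↦ x ^ e) (1 - x)⁻¹ := hasSum_geometric_of_norm_lt_one hx
  have h2 : HasSum (fun e : ℕ ↦ if e = 0 then (2 : ℂ) else 0) 2 := by
    simpa using hasSum_ite_eq 0 (2 : ℂ)
  have h3 := h2.sub h1
  have hone : (1 : ℂ) - x ≠ 0 := by
    intro h
    have h4 : (1:ℝ) - ‖x‖ ≤ ‖(1:ℂ) - x‖ := by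
      calc (1:ℝ) - ‖x‖ = ‖(1:ℂ)‖ - ‖x‖ := by simp
        _ ≤ ‖(1:ℂ) - x‖ := norm_sub_norm_le _ _
    rw [h, norm_zero] at h4
    linarith
  have hfun : (fun e : ℕ ↦ F s ((p : ℕ) ^ e)) =
      fun e : ℕ ↦ (if e = 0 then (2 : ℂ) else 0) - x ^ e := by
    funext e
    rcases eq_or_ne e 0 with rfl | he
    · norm_num [F_one]
    · rw [if_neg he]
      unfold F
      rw [cardDistinctFactors_apply_prime_pow p.prop he, prime_pow_cpow, pow_one]
      ring
  have hval : (2 : ℂ) - (1 - x)⁻¹ = (1 - 2 * x) * (1 - x)⁻¹ := by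
    field_simp
    ring
  rw [hfun, ← hval]
  exact h3

lemma zeta_re {s : ℂ} (hs : 1 < s.re) (k : ℕ) (hk : 1 ≤ k) : 1 < ((k : ℂ) * s).re := by
  have h1 : ((k : ℂ) * s).re = k * s.re := by
    simp [Complex.mul_re]
  rw [h1]
  have h2 : (1:ℝ) ≤ (k : ℝ) := by exact_mod_cast hk
  nlinarith

end F6

theorem F6_multipliable_and_identity :
    (∀ s : ℂ, 1 / 7 < s.re → Multipliable (F6Term s)) ∧
    (∀ s : ℂ, 1 < s.re →
      (∑' n : ℕ, (-1 : ℂ) ^ (ω n) / (n : ℂ) ^ s) *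
        (riemannZeta s * riemannZeta (2 * s) * riemannZeta (3 * s) ^ 2 *
          riemannZeta (4 * s) ^ 3 * riemannZeta (5 * s) ^ 6 * riemannZeta (6 * s) ^ 9) =
        ∏' p : Nat.Primes, F6Term s p) := by
  constructor
  · exact F6.multipliable
  · intro s hs
    have hs0 : s ≠ 0 := by
      intro h
      rw [h] at hs
      simp at hs
      linarith
    have heuler := EulerProduct.eulerProduct_hasProd (f := F6.F s) (F6.F_one s)
      (fun {m n} h ↦ F6.F_mul hs0 h) (F6.F_summable hs) (F6.F_zero hs0)
    have hfe : (fun p : Nat.Primes ↦ ∑' e : ℕ, F6.F s ((p : ℕ) ^ e)) =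
        fun p : Nat.Primes ↦
          (1 - 2 * ((p : ℕ) : ℂ) ^ (-s)) * (1 - ((p : ℕ) : ℂ) ^ (-s))⁻¹ := by
      funext p
      exact (F6.factor_hasSum hs p).tsum_eq
    rw [hfe] at heuler
    have hz1 := riemannZeta_eulerProduct_hasProd hs
    have hz2 := riemannZeta_eulerProduct_hasProd (s := 2 * s)
      (by simpa using F6.zeta_re hs 2 (by norm_num))
    have hz3 := riemannZeta_eulerProduct_hasProd (s := 3 * s)
      (by simpa using F6.zeta_re hs 3 (by norm_num))
    have hz4 := riemannZeta_eulerProduct_hasProd (s := 4 * s)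
      (by simpa using F6.zeta_re hs 4 (by norm_num))
    have hz5 := riemannZeta_eulerProduct_hasProd (s := 5 * s)
      (by simpa using F6.zeta_re hs 5 (by norm_num))
    have hz6 := riemannZeta_eulerProduct_hasProd (s := 6 * s)
      (by simpa using F6.zeta_re hs 6 (by norm_num))
    have h3sq := hz3.mul hz3
    have h4cb := hz4.mul (hz4.mul hz4)
    have h5six := hz5.mul (hz5.mul (hz5.mul (hz5.mul (hz5.mul hz5))))
    have h6nine := hz6.mul (hz6.mul (hz6.mul (hz6.mul (hz6.mul (hz6.mul (hz6.mul
      (hz6.mul hz6)))))))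
    have H := (((((heuler.mul hz1).mul hz2).mul h3sq).mul h4cb).mul h5six).mul h6nine
    have hF6 := H.congr_fun (g := F6Term s) (fun p ↦ by
      unfold F6Term
      simp only [← inv_pow]
      ring)
    rw [hF6.tprod_eq]
    have htsum : (∑' n : ℕ, (-1 : ℂ) ^ (ω n) / (n : ℂ) ^ s) = ∑' n, F6.F s n := by
      apply tsum_congr
      intro n
      unfold F6.F
      rw [Complex.cpow_neg, div_eq_mul_inv]
    rw [htsum]
    ring
end

section
/- For every complex number s with Re s > 1, the series ∑_{n=1}^{∞} (−2)^{Ω(n)} n^{−s} converges absolutely, the product ∏_{p prime} (1 + 2p^{−s})^{−1} converges (is multipliable), and ∑_{n=1}^{∞} (−2)^{Ω(n)} n^{−s} = ∏_{p prime} (1 + 2p^{−s})^{−1}. -/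
open ArithmeticFunction Complex EulerProduct
open scoped ArithmeticFunction.Omega

noncomputable def WHomAux (s : ℂ) (hs : s ≠ 0) : ℕ →*₀ ℂ where
  toFun n := (-2 : ℂ) ^ (Ω n) * (n : ℂ) ^ (-s)
  map_zero' := by simp [Complex.zero_cpow (neg_ne_zero.mpr hs)]
  map_one' := by simp
  map_mul' m n := by
    rcases eq_or_ne m 0 with rfl | hm
    · simp [Complex.zero_cpow (neg_ne_zero.mpr hs)]
    rcases eq_or_ne n 0 with rfl | hn
    · simp [Complex.zero_cpow (neg_ne_zero.mpr hs)]
    simp only [ArithmeticFunction.cardFactors_mul hm hn, pow_add, Nat.cast_mul]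
    rw [show ((m : ℂ) * (n : ℂ)) ^ (-s) = (m : ℂ) ^ (-s) * (n : ℂ) ^ (-s) by
      simpa only [ofReal_natCast] using
        mul_cpow_ofReal_nonneg m.cast_nonneg n.cast_nonneg (-s)]
    ring

noncomputable def WNormAux (x₀ : ℝ) (hx₀ : x₀ ≠ 0) : ℕ →* ℝ where
  toFun n := (2 : ℝ) ^ (Ω n) * (n : ℝ) ^ (-x₀)
  map_one' := by simp
  map_mul' m n := by
    rcases eq_or_ne m 0 with rfl | hm
    · simp [Real.zero_rpow (neg_ne_zero.mpr hx₀)]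
    rcases eq_or_ne n 0 with rfl | hn
    · simp [Real.zero_rpow (neg_ne_zero.mpr hx₀)]
    simp only [ArithmeticFunction.cardFactors_mul hm hn, pow_add, Nat.cast_mul,
      Real.mul_rpow m.cast_nonneg n.cast_nonneg]
    ring

lemma WNormAux_nonneg (x₀ : ℝ) (hx₀ : x₀ ≠ 0) (n : ℕ) : 0 ≤ WNormAux x₀ hx₀ n := by
  have : (0:ℝ) ≤ (n : ℝ) ^ (-x₀) := Real.rpow_nonneg n.cast_nonneg _
  simp only [WNormAux, MonoidHom.coe_mk, OneHom.coe_mk]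
  positivity

lemma WNormAux_le (x₀ : ℝ) (hx₀ : x₀ ≠ 0) {p : ℕ} (hp : p.Prime) :
    WNormAux x₀ hx₀ p = 2 * (p : ℝ) ^ (-x₀) := by
  simp [WNormAux, ArithmeticFunction.cardFactors_apply_prime hp]

lemma WNormAux_prime_lt_one {x₀ : ℝ} (hx₀ : 1 < x₀) {p : ℕ} (hp : p.Prime) :
    WNormAux x₀ (by linarith) p < 1 := by
  have hp2 : (2:ℝ) ≤ p := by exact_mod_cast hp.two_le
  have h1p : (1:ℝ) < p := by linarith
  have hps : (2:ℝ) < (p:ℝ) ^ x₀ := by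
    calc (2:ℝ) ≤ p := hp2
    _ = (p:ℝ) ^ (1:ℝ) := (Real.rpow_one _).symm
    _ < (p:ℝ) ^ x₀ := Real.rpow_lt_rpow_of_exponent_lt h1p hx₀
  have hpos : (0:ℝ) < (p:ℝ) ^ x₀ := by linarith
  rw [WNormAux_le _ _ hp, Real.rpow_neg (le_of_lt (by linarith : (0:ℝ) < p))]
  rw [mul_inv_lt_iff₀' hpos]
  linarith

lemma summable_WNormAux {x₀ : ℝ} (hx₀ : 1 < x₀) :
    Summable (fun n : ℕ => (2 : ℝ) ^ (Ω n) * (n : ℝ) ^ (-x₀)) := by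
  have hx₀0 : x₀ ≠ 0 := by linarith
  set h := WNormAux x₀ hx₀0 with hh
  have hfun : (fun n : ℕ => (2 : ℝ) ^ (Ω n) * (n : ℝ) ^ (-x₀)) = fun n => h n := rfl
  rw [hfun]
  -- the comparison series
  have S2 : Summable (fun n : ℕ => 2 * (n : ℝ) ^ (-x₀)) := by
    apply Summable.mul_left
    exact (Real.summable_nat_rpow_inv.mpr hx₀).congr fun n =>
      (Real.rpow_neg n.cast_nonneg _).symm
  set T := ∑' n : ℕ, 2 * (n : ℝ) ^ (-x₀) with hT
  -- the uniform bound a on h p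
  set a : ℝ := 2 * (2 : ℝ) ^ (-x₀) with ha
  have ha1 : a < 1 := by
    have := WNormAux_prime_lt_one hx₀ Nat.prime_two
    rwa [WNormAux_le _ _ Nat.prime_two] at this
  have ha0 : 0 ≤ a := by positivity
  set C : ℝ := (1 - a)⁻¹ with hC
  have hC0 : 0 < C := inv_pos.mpr (by linarith)
  have hple : ∀ {p : ℕ}, p.Prime → h p ≤ a := by
    intro p hp
    rw [WNormAux_le _ _ hp, ha]
    have hp2 : (2:ℝ) ≤ p := by exact_mod_cast hp.two_le
    have : (p:ℝ) ^ (-x₀) ≤ (2:ℝ) ^ (-x₀) :=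
      Real.rpow_le_rpow_of_nonpos two_pos hp2 (by linarith)
    linarith
  -- factor bound
  have hfact : ∀ {p : ℕ}, p.Prime → (1 - h p)⁻¹ ≤ Real.exp (C * h p) := by
    intro p hp
    have h0 : 0 ≤ h p := WNormAux_nonneg _ _ _
    have hlea : h p ≤ a := hple hp
    have h1 : 0 < 1 - h p := by linarith
    have h1a : 0 < 1 - a := by linarith
    have key : (1 - h p)⁻¹ ≤ 1 + C * h p := by
      rw [inv_le_iff_one_le_mul₀ h1]
      have hCa : C * (1 - a) = 1 := inv_mul_cancel₀ (by linarith)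
      nlinarith [mul_nonneg (mul_nonneg hC0.le h0) h0]
    calc (1 - h p)⁻¹ ≤ 1 + C * h p := key
    _ ≤ Real.exp (C * h p) := by
        have := Real.add_one_le_exp (C * h p); linarith
  -- bound on partial sums
  refine summable_of_sum_range_le (c := Real.exp (C * T)) (fun n => WNormAux_nonneg _ _ n) (fun N => ?_)
  have hlt : ∀ {p : ℕ}, p.Prime → ‖h p‖ < 1 := by
    intro p hp
    rw [Real.norm_eq_abs, _root_.abs_of_nonneg (WNormAux_nonneg _ _ _)]
    exact WNormAux_prime_lt_one hx₀ hp
  obtain ⟨hsum, hassum⟩ := summable_and_hasSum_smoothNumbers_prod_primesBelow_geometric hlt N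
  -- sum over range N ≤ tsum over smooth numbers
  have hsub : Summable (fun m : N.smoothNumbers => h m) := hsum.of_norm
  have hind : Summable (Set.indicator N.smoothNumbers (fun n => h n)) :=
    summable_subtype_iff_indicator.mp hsub
  have step1 : ∑ i ∈ Finset.range N, h i ≤
      ∑' n : ℕ, Set.indicator N.smoothNumbers (fun n => h n) n := by
    have hle : ∀ i ∈ Finset.range N, h i ≤
        Set.indicator N.smoothNumbers (fun n => h n) i := by
      intro i hi
      rcases eq_or_ne i 0 with rfl | hi0
      · have : h 0 = 0 := by
          simp [hh, WNormAux, Real.zero_rpow (neg_ne_zero.mpr hx₀0)]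
        rw [this]
        exact Set.indicator_nonneg (fun n _ => WNormAux_nonneg _ _ n) 0
      · rw [Set.indicator_of_mem
          (Nat.mem_smoothNumbers_of_lt (Nat.pos_of_ne_zero hi0) (Finset.mem_range.mp hi))]
    calc ∑ i ∈ Finset.range N, h i
        ≤ ∑ i ∈ Finset.range N, Set.indicator N.smoothNumbers (fun n => h n) i :=
          Finset.sum_le_sum hle
    _ ≤ ∑' n : ℕ, Set.indicator N.smoothNumbers (fun n => h n) n :=
          hind.sum_le_tsum _ (fun i _ =>
            Set.indicator_nonneg (fun n _ => WNormAux_nonneg _ _ n) i)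
  have step2 : (∑' n : ℕ, Set.indicator N.smoothNumbers (fun n => h n) n) =
      ∏ p ∈ N.primesBelow, (1 - h p)⁻¹ := by
    rw [← tsum_subtype]
    exact hassum.tsum_eq
  -- product bound
  have step3 : ∏ p ∈ N.primesBelow, (1 - h p)⁻¹ ≤ Real.exp (C * T) := by
    calc ∏ p ∈ N.primesBelow, (1 - h p)⁻¹
        ≤ ∏ p ∈ N.primesBelow, Real.exp (C * h p) := by
          refine Finset.prod_le_prod (fun p hp => ?_) (fun p hp => ?_)
          · have := hlt (Nat.prime_of_mem_primesBelow hp)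
            rw [Real.norm_eq_abs, _root_.abs_of_nonneg (WNormAux_nonneg _ _ _)] at this
            have h2 : 0 < 1 - h p := by linarith
            positivity
          · exact hfact (Nat.prime_of_mem_primesBelow hp)
    _ = Real.exp (∑ p ∈ N.primesBelow, C * h p) := (Real.exp_sum _ _).symm
    _ ≤ Real.exp (C * T) := by
          rw [Real.exp_le_exp, ← Finset.mul_sum]
          refine mul_le_mul_of_nonneg_left ?_ hC0.le
          have : ∑ p ∈ N.primesBelow, h p ≤ ∑' n : ℕ, 2 * (n : ℝ) ^ (-x₀) := by
            have heq : ∀ p ∈ N.primesBelow, h p = 2 * (p : ℝ) ^ (-x₀) := fun p hp =>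
              WNormAux_le _ _ (Nat.prime_of_mem_primesBelow hp)
            rw [Finset.sum_congr rfl heq]
            exact S2.sum_le_tsum _ (fun i _ => by positivity)
          exact this
  calc ∑ i ∈ Finset.range N, h i ≤ _ := step1
  _ = _ := step2
  _ ≤ Real.exp (C * T) := step3

theorem dirichlet_series_W (s : ℂ) (hs : 1 < s.re) :
    Summable (fun n : ℕ => ‖(-2 : ℂ) ^ (Ω n) / (n : ℂ) ^ s‖) ∧
    Multipliable (fun p : Nat.Primes => (1 + 2 * ((p : ℕ) : ℂ) ^ (-s))⁻¹) ∧
    ∑' n : ℕ, (-2 : ℂ) ^ (Ω n) / (n : ℂ) ^ s =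
      ∏' p : Nat.Primes, (1 + 2 * ((p : ℕ) : ℂ) ^ (-s))⁻¹ := by
  have hs0 : s ≠ 0 := ne_zero_of_one_lt_re hs
  set f := WHomAux s hs0 with hf
  have hfn : ∀ n : ℕ, f n = (-2 : ℂ) ^ (Ω n) / (n : ℂ) ^ s := by
    intro n
    simp [hf, WHomAux, cpow_neg, div_eq_mul_inv]
  have hnorm : ∀ n : ℕ, ‖f n‖ = (2 : ℝ) ^ (Ω n) * (n : ℝ) ^ (-s.re) := by
    intro n
    simp only [hf, WHomAux, MonoidWithZeroHom.coe_mk, ZeroHom.coe_mk, norm_mul, norm_pow,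
      norm_neg]
    rw [← ofReal_natCast,
      norm_cpow_eq_rpow_re_of_nonneg n.cast_nonneg
        (by simpa using re_neg_ne_zero_of_one_lt_re hs), neg_re]
    norm_num
  have hsum : Summable (fun n : ℕ => ‖f n‖) := by
    refine (summable_WNormAux hs).congr fun n => (hnorm n).symm
  have hprod := eulerProduct_completely_multiplicative_hasProd hsum
  have hfp : ∀ p : Nat.Primes, (1 - f p)⁻¹ = (1 + 2 * ((p : ℕ) : ℂ) ^ (-s))⁻¹ := by
    intro p
    congr 1
    rw [hf]
    simp only [WHomAux, MonoidWithZeroHom.coe_mk, ZeroHom.coe_mk,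
      ArithmeticFunction.cardFactors_apply_prime p.prop, pow_one]
    ring
  rw [funext hfp] at hprod
  refine ⟨?_, hprod.multipliable, ?_⟩
  · exact hsum.congr fun n => by rw [hnorm, ← hnorm, hfn]
  · rw [hprod.tprod_eq]
    exact tsum_congr fun n => (hfn n).symm
end
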